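/- Let T be a completely positive operator on M_n(ℂ) and suppose C is a Hermitian positive definite matrix such that trace[(C · T*(T(C)^{-1}) − I)²] ≤ ε with ε ≤ 1/(n+1). Then cap(T) ≥ (1 − √(nε))^n · Det(T(C))/Det(C) and cap(T) ≤ Det(T(C))/Det(C). -/

import Mathlib

open Matrix
open scoped ComplexOrder

/-- The capacity of the completely positive operator `T(X) = ∑ i, A i * X * (A i)ᴴ`. -/
noncomputable def cap {ι N : Type*} [Fintype ι] [Fintype N] [DecidableEq N]
    (A : ι → Matrix N N ℂ) : ℝ :=
  sInf { r : ℝ | ∃ X : Matrix N N ℂ,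
    X.PosDef ∧ X.det = 1 ∧ ((∑ i, A i * X * (A i)ᴴ).det).re = r }

namespace CapProof
open Finset


lemma abel_nonneg (n : ℕ) (H lam : ℕ → ℝ)
    (hH0 : H 0 = 0) (hH : ∀ k, k ≤ n → 0 ≤ H k)
    (hanti : ∀ j k : ℕ, j ≤ k → lam k ≤ lam j) (hnn : ∀ k, 0 ≤ lam k) :
    H n * lam n ≤ ∑ j ∈ Finset.range n, (H (j+1) - H j) * lam j := by
  induction n with
  | zero => simp [hH0]
  | succ n ih =>
    rw [Finset.sum_range_succ]
    have h1 : H n * lam n ≤ ∑ j ∈ Finset.range n, (H (j+1) - H j) * lam j :=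
      ih (fun k hk => hH k (hk.trans (Nat.le_succ n)))
    have h2 : H (n+1) * lam (n+1) ≤ H (n+1) * lam n :=
      mul_le_mul_of_nonneg_left (hanti n (n+1) (Nat.le_succ n)) (hH (n+1) le_rfl)
    nlinarith [h1, h2]

noncomputable def greedyU {N : ℕ} (F : Fin N → ℕ → ℝ) : ℕ → Fin N → ℝ
  | 0 => fun _ => 0
  | k+1 => fun i => greedyU F k i +
      (F i (k+1) - greedyU F k i) / (∑ i', (F i' (k+1) - greedyU F k i'))

lemma greedyU_inv {N : ℕ} (F : Fin N → ℕ → ℝ)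
    (hmono : ∀ i, Monotone (F i)) (hF0 : ∀ i, F i 0 = 0)
    (hkey : ∀ k, k ≤ N → (k:ℝ) ≤ ∑ i, F i k) :
    ∀ k, k ≤ N → (∑ i, greedyU F k i = (k:ℝ)) ∧ (∀ i, 0 ≤ greedyU F k i)
      ∧ (∀ i, greedyU F k i ≤ F i k) := by
  intro k
  induction k with
  | zero => intro _; refine ⟨by simp [greedyU], fun i => le_refl _, fun i => ?_⟩
            simp [greedyU, hF0 i]
  | succ k ih =>
    intro hk1
    obtain ⟨hsum, hnn, hle⟩ := ih (Nat.le_of_succ_le hk1)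
    set S := ∑ i', (F i' (k+1) - greedyU F k i') with hS
    have hSval : S = (∑ i', F i' (k+1)) - (k:ℝ) := by
      rw [hS, Finset.sum_sub_distrib, hsum]
    have hS1 : (1:ℝ) ≤ S := by
      have := hkey (k+1) hk1
      rw [hSval]
      push_cast at this ⊢
      linarith
    have hSpos : (0:ℝ) < S := lt_of_lt_of_le one_pos hS1
    have hdel : ∀ i, 0 ≤ F i (k+1) - greedyU F k i := by
      intro i
      have := hmono i (Nat.le_succ k)
      have := hle i
      linarith
    refine ⟨?_, ?_, ?_⟩
    · have heq : ∑ i, (greedyU F k i + (F i (k+1) - greedyU F k i) / S) = ((k:ℝ)+1 : ℝ) := by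
        rw [Finset.sum_add_distrib, hsum, ← Finset.sum_div, ← hS, div_self hSpos.ne']
      show ∑ i, (greedyU F k i + (F i (k+1) - greedyU F k i) / S) = ((k+1 : ℕ) : ℝ)
      rw [heq]; push_cast; ring
    · intro i
      show 0 ≤ greedyU F k i + (F i (k+1) - greedyU F k i) / S
      have : 0 ≤ (F i (k+1) - greedyU F k i) / S := div_nonneg (hdel i) hSpos.le
      linarith [hnn i]
    · intro i
      show greedyU F k i + (F i (k+1) - greedyU F k i) / S ≤ F i (k+1)
      have : (F i (k+1) - greedyU F k i) / S ≤ F i (k+1) - greedyU F k i :=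
        div_le_self (hdel i) hS1
      linarith


lemma greedyU_step {N : ℕ} (F : Fin N → ℕ → ℝ)
    (hmono : ∀ i, Monotone (F i)) (hF0 : ∀ i, F i 0 = 0)
    (hkey : ∀ k, k ≤ N → (k:ℝ) ≤ ∑ i, F i k)
    (k : ℕ) (hk : k + 1 ≤ N) (i : Fin N) :
    greedyU F k i ≤ greedyU F (k+1) i := by
  obtain ⟨hsum, hnn, hle⟩ := greedyU_inv F hmono hF0 hkey k (Nat.le_of_succ_le hk)
  have hSval : ∑ i', (F i' (k+1) - greedyU F k i') = (∑ i', F i' (k+1)) - (k:ℝ) := by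
    rw [Finset.sum_sub_distrib, hsum]
  have hS1 : (1:ℝ) ≤ ∑ i', (F i' (k+1) - greedyU F k i') := by
    have := hkey (k+1) hk
    rw [hSval]; push_cast at this ⊢; linarith
  have hdel : 0 ≤ F i (k+1) - greedyU F k i := by
    have h1 := hmono i (Nat.le_succ k); have h2 := hle i; linarith
  show greedyU F k i ≤ greedyU F k i + _
  have : 0 ≤ (F i (k+1) - greedyU F k i) / (∑ i', (F i' (k+1) - greedyU F k i')) :=
    div_nonneg hdel (by linarith)
  linarith

lemma prod_rpow_sum {ι : Type*} (s : Finset ι) (x : ℝ) (hx : 0 < x) (w : ι → ℝ) :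
    ∏ i ∈ s, x ^ w i = x ^ (∑ i ∈ s, w i) := by
  classical
  induction s using Finset.induction_on with
  | empty => simp
  | insert a s hnotmem ih =>
    rw [Finset.prod_insert hnotmem, Finset.sum_insert hnotmem, Real.rpow_add hx, ih]

lemma core_sorted (N : ℕ) (β : ℝ) (hβ0 : 0 ≤ β) (hβ1 : β < 1)
    (a : Fin N → ℕ → ℝ) (ha : ∀ i j, 0 ≤ a i j)
    (hrow : ∀ i, ∑ j ∈ range N, a i j = 1)
    (hpre : ∀ k, k ≤ N → (k : ℝ) - β ≤ ∑ i, ∑ j ∈ range k, a i j)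
    (lam : ℕ → ℝ) (hlamnn : ∀ j, 0 ≤ lam j)
    (hlampos : ∀ j, j < N → 0 < lam j)
    (hanti : ∀ j k, j ≤ k → lam k ≤ lam j) :
    (1-β)^N * ∏ j ∈ range N, lam j ≤ ∏ i, ∑ j ∈ range N, a i j * lam j := by
  classical
  have h1β : 0 < 1 - β := by linarith
  set F : Fin N → ℕ → ℝ := fun i k => min 1 ((∑ j ∈ range k, a i j)/(1-β)) with hFdef
  have hApre_nonneg : ∀ i k, 0 ≤ ∑ j ∈ range k, a i j :=
    fun i k => Finset.sum_nonneg (fun j _ => ha i j)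
  have hApre_le_one : ∀ i k, k ≤ N → (∑ j ∈ range k, a i j) ≤ 1 := by
    intro i k hk
    rw [← hrow i]
    exact Finset.sum_le_sum_of_subset_of_nonneg (Finset.range_subset_range.2 hk)
      (fun j _ _ => ha i j)
  have hFmono : ∀ i, Monotone (F i) := by
    intro i
    apply monotone_nat_of_le_succ
    intro k
    refine min_le_min le_rfl ((div_le_div_iff_of_pos_right h1β).2 ?_)
    rw [Finset.sum_range_succ]
    linarith [ha i k]
  have hF0 : ∀ i, F i 0 = 0 := by intro i; simp [hFdef]
  have hF1 : ∀ i k, F i k ≤ 1 := fun i k => min_le_left _ _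
  have hkey : ∀ k, k ≤ N → (k:ℝ) ≤ ∑ i, F i k := by
    intro k hk
    set T := univ.filter (fun i : Fin N => 1 - β < ∑ j ∈ range k, a i j) with hTdef
    have hsplit : ∑ i, F i k
        = (T.card : ℝ) + ∑ i ∈ univ.filter
            (fun i : Fin N => ¬ (1 - β < ∑ j ∈ range k, a i j)),
            (∑ j ∈ range k, a i j)/(1-β) := by
      rw [← Finset.sum_filter_add_sum_filter_not univ
        (fun i : Fin N => 1 - β < ∑ j ∈ range k, a i j) (fun i => F i k)]
      congr 1
      · rw [Finset.sum_congr rfl (g := fun _ => (1:ℝ)) (fun i hi => ?_), Finset.sum_const,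
          nsmul_eq_mul, mul_one, hTdef]
        have hi' := (Finset.mem_filter.1 hi).2
        apply min_eq_left
        rw [le_div_iff₀ h1β]; linarith
      · refine Finset.sum_congr rfl (fun i hi => ?_)
        have hi' := (Finset.mem_filter.1 hi).2
        push_neg at hi'
        apply min_eq_right
        rw [div_le_one h1β]; linarith
    by_cases hcase : k ≤ T.card
    · rw [hsplit]
      have h2 : 0 ≤ ∑ i ∈ univ.filter
          (fun i : Fin N => ¬ (1 - β < ∑ j ∈ range k, a i j)),
          (∑ j ∈ range k, a i j)/(1-β) :=
        Finset.sum_nonneg (fun i _ => div_nonneg (hApre_nonneg i k) h1β.le)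
      have h3 : (k:ℝ) ≤ T.card := Nat.cast_le.2 hcase
      linarith
    · push_neg at hcase
      have htle : (T.card : ℝ) + 1 ≤ k := by exact_mod_cast Nat.cast_le.2 hcase
      have hTc : ∑ i ∈ T, (∑ j ∈ range k, a i j) ≤ (T.card : ℝ) := by
        calc ∑ i ∈ T, (∑ j ∈ range k, a i j) ≤ ∑ _i ∈ T, (1:ℝ) :=
              Finset.sum_le_sum (fun i _ => hApre_le_one i k hk)
          _ = T.card := by rw [Finset.sum_const, nsmul_eq_mul, mul_one]
      have hcompl : ((k:ℝ) - β) - T.card ≤ ∑ i ∈ univ.filter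
          (fun i : Fin N => ¬ (1 - β < ∑ j ∈ range k, a i j)),
          (∑ j ∈ range k, a i j) := by
        have hall := hpre k hk
        have hsplit2 : ∑ i, ∑ j ∈ range k, a i j
            = ∑ i ∈ T, (∑ j ∈ range k, a i j) + ∑ i ∈ univ.filter
              (fun i : Fin N => ¬ (1 - β < ∑ j ∈ range k, a i j)),
              (∑ j ∈ range k, a i j) := by
          rw [hTdef, Finset.sum_filter_add_sum_filter_not]
        linarith
      rw [hsplit]
      have hdiv : ((k:ℝ) - β - T.card)/(1-β) ≤ ∑ i ∈ univ.filter
          (fun i : Fin N => ¬ (1 - β < ∑ j ∈ range k, a i j)),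
          (∑ j ∈ range k, a i j)/(1-β) := by
        rw [← Finset.sum_div]
        exact (div_le_div_iff_of_pos_right h1β).2 hcompl
      have hfin : (k:ℝ) - T.card ≤ ((k:ℝ) - β - T.card)/(1-β) := by
        rw [le_div_iff₀ h1β]
        nlinarith
      linarith
  -- greedy transport
  set U := greedyU F with hUdef
  have hinv := greedyU_inv F hFmono hF0 hkey
  set g : Fin N → ℕ → ℝ := fun i k => U (k+1) i - U k i with hgdef
  have hg_nonneg : ∀ i k, k < N → 0 ≤ g i k := by
    intro i k hk
    have := greedyU_step F hFmono hF0 hkey k hk i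
    simp only [hgdef]
    linarith [this]
  have hU0 : ∀ i, U 0 i = 0 := fun i => rfl
  have hUrow : ∀ i, ∑ j ∈ range N, g i j = U N i := by
    intro i
    simp only [hgdef]
    rw [Finset.sum_range_sub (fun k => U k i) N, hU0 i, sub_zero]
  have hUN1 : ∀ i, U N i = 1 := by
    have hsumN := (hinv N le_rfl).1
    have hleN : ∀ i, U N i ≤ 1 := fun i => le_trans ((hinv N le_rfl).2.2 i) (hF1 i N)
    intro i
    have hzero : ∑ i : Fin N, ((1:ℝ) - U N i) = 0 := by
      rw [Finset.sum_sub_distrib, hsumN, Finset.sum_const, Finset.card_univ,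
        Fintype.card_fin, nsmul_eq_mul, mul_one, sub_self]
    have := (Finset.sum_eq_zero_iff_of_nonneg
      (fun i _ => by linarith [hleN i])).1 hzero i (Finset.mem_univ i)
    linarith
  have hrowg : ∀ i, ∑ j ∈ range N, g i j = 1 := fun i => (hUrow i).trans (hUN1 i)
  have hcolg : ∀ k, k < N → ∑ i, g i k = 1 := by
    intro k hk
    simp only [hgdef]
    rw [Finset.sum_sub_distrib, (hinv (k+1) hk).1, (hinv k (le_of_lt hk)).1]
    push_cast; ring
  have hdom : ∀ i k, k ≤ N → (1-β) * U k i ≤ ∑ j ∈ range k, a i j := by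
    intro i k hk
    have h1 : (1-β) * U k i ≤ (1-β) * F i k :=
      mul_le_mul_of_nonneg_left ((hinv k hk).2.2 i) h1β.le
    have h2 : (1-β) * F i k ≤ ∑ j ∈ range k, a i j := by
      calc (1-β) * F i k ≤ (1-β) * ((∑ j ∈ range k, a i j)/(1-β)) :=
            mul_le_mul_of_nonneg_left (min_le_right _ _) h1β.le
        _ = ∑ j ∈ range k, a i j := by field_simp
    linarith
  -- per-row inequality via Abel summation
  have hperrow : ∀ i, (1-β) * ∑ j ∈ range N, g i j * lam j
      ≤ ∑ j ∈ range N, a i j * lam j := by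
    intro i
    set H : ℕ → ℝ := fun k => (∑ j ∈ range k, a i j) - (1-β) * U k i with hHdef
    have hH0 : H 0 = 0 := by simp [hHdef, hU0]
    have hHnn : ∀ k, k ≤ N → 0 ≤ H k := by
      intro k hk; simp only [hHdef]; linarith [hdom i k hk]
    have habel := abel_nonneg N H lam hH0 hHnn hanti hlamnn
    have hHlamnn : 0 ≤ H N * lam N := mul_nonneg (hHnn N le_rfl) (hlamnn N)
    have hterm : ∀ j, (H (j+1) - H j) * lam j
        = a i j * lam j - (1-β) * (g i j * lam j) := by
      intro j
      have : H (j+1) - H j = a i j - (1-β) * g i j := by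
        simp only [hHdef, hgdef, Finset.sum_range_succ]
        ring
      rw [this]; ring
    have hsum : ∑ j ∈ range N, (H (j+1) - H j) * lam j
        = ∑ j ∈ range N, a i j * lam j - (1-β) * ∑ j ∈ range N, g i j * lam j := by
      rw [Finset.mul_sum, ← Finset.sum_sub_distrib]
      exact Finset.sum_congr rfl (fun j _ => hterm j)
    rw [hsum] at habel
    linarith
  -- AM-GM per row
  have hamgm : ∀ i, ∏ j ∈ range N, lam j ^ (g i j) ≤ ∑ j ∈ range N, g i j * lam j := by
    intro i
    apply Real.geom_mean_le_arith_mean_weighted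
    · intro j hj; exact hg_nonneg i j (Finset.mem_range.1 hj)
    · exact hrowg i
    · intro j _; exact hlamnn j
  -- combine over rows
  have hptwise : ∀ i : Fin N, (1-β) * ∏ j ∈ range N, lam j ^ (g i j)
      ≤ ∑ j ∈ range N, a i j * lam j := by
    intro i
    calc (1-β) * ∏ j ∈ range N, lam j ^ (g i j)
        ≤ (1-β) * ∑ j ∈ range N, g i j * lam j :=
          mul_le_mul_of_nonneg_left (hamgm i) h1β.le
      _ ≤ ∑ j ∈ range N, a i j * lam j := hperrow i
  have hprod : ∏ i : Fin N, ((1-β) * ∏ j ∈ range N, lam j ^ (g i j))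
      ≤ ∏ i, ∑ j ∈ range N, a i j * lam j := by
    apply Finset.prod_le_prod
    · intro i _
      exact mul_nonneg h1β.le (Finset.prod_nonneg
        (fun j _ => Real.rpow_nonneg (hlamnn j) _))
    · intro i _; exact hptwise i
  have hlhs : ∏ i : Fin N, ((1-β) * ∏ j ∈ range N, lam j ^ (g i j))
      = (1-β)^N * ∏ j ∈ range N, lam j := by
    rw [Finset.prod_mul_distrib, Finset.prod_const, Finset.card_univ, Fintype.card_fin]
    congr 1
    rw [Finset.prod_comm]
    refine Finset.prod_congr rfl (fun j hj => ?_)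
    have hjN := Finset.mem_range.1 hj
    rw [prod_rpow_sum univ (lam j) (hlampos j hjN) (fun i => g i j), hcolg j hjN,
      Real.rpow_one]
  rw [← hlhs]
  exact hprod

lemma dite_sum_fin {N : ℕ} (k : ℕ) (hk : k ≤ N) (f : Fin N → ℝ) :
    ∑ m ∈ range k, (if h : m < N then f ⟨m,h⟩ else 0)
      = ∑ p ∈ univ.filter (fun p : Fin N => (p:ℕ) < k), f p := by
  classical
  refine Finset.sum_bij' (fun (m : ℕ) (hm : m ∈ range k) => (⟨m, (Finset.mem_range.1 hm).trans_le hk⟩ : Fin N))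
    (fun (p : Fin N) (_ : p ∈ univ.filter (fun p : Fin N => (p:ℕ) < k)) => (p : ℕ)) ?_ ?_ ?_ ?_ ?_
  · intro m hm
    simp [Finset.mem_filter, Finset.mem_range.1 hm]
  · intro p hp
    simp [Finset.mem_range, (Finset.mem_filter.1 hp).2]
  · intro m hm; rfl
  · intro p hp; rfl
  · intro m hm
    rw [dif_pos ((Finset.mem_range.1 hm).trans_le hk)]

lemma core_main (N : ℕ) (β : ℝ) (hβ0 : 0 ≤ β) (hβ1 : β < 1)
    (a : Fin N → Fin N → ℝ) (ha : ∀ i j, 0 ≤ a i j)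
    (hrow : ∀ i, ∑ j, a i j = 1)
    (hcol : ∀ S : Finset (Fin N), (S.card : ℝ) - β ≤ ∑ j ∈ S, ∑ i, a i j)
    (lam : Fin N → ℝ) (hlam : ∀ j, 0 < lam j) :
    (1-β)^N * ∏ j, lam j ≤ ∏ i, ∑ j, a i j * lam j := by
  classical
  set σ := Tuple.sort (fun j => -lam j) with hσdef
  have hmono := Tuple.monotone_sort (fun j => -lam j)
  have hanti : ∀ p q : Fin N, p ≤ q → lam (σ q) ≤ lam (σ p) := by
    intro p q hpq
    have := hmono hpq
    simp only [Function.comp_apply] at this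
    simp only [hσdef] at this ⊢
    linarith
  set a2 : Fin N → ℕ → ℝ := fun i k => if h : k < N then a i (σ ⟨k,h⟩) else 0 with ha2def
  set lam2 : ℕ → ℝ := fun k => if h : k < N then lam (σ ⟨k,h⟩) else 0 with hlam2def
  have ha2nn : ∀ i k, 0 ≤ a2 i k := by
    intro i k; dsimp only [a2]; split
    · exact ha i _
    · exact le_rfl
  have hfin : ∀ (f : Fin N → ℝ),
      ∑ k ∈ range N, (if h : k < N then f ⟨k,h⟩ else 0) = ∑ j, f j := by
    intro f
    rw [← Fin.sum_univ_eq_sum_range (fun k => if h : k < N then f ⟨k,h⟩ else 0) N]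
    exact Finset.sum_congr rfl (fun i _ => by simp [i.isLt])
  have hrow2 : ∀ i, ∑ j ∈ range N, a2 i j = 1 := by
    intro i
    rw [show (fun j => a2 i j) = fun k => if h : k < N then a i (σ ⟨k,h⟩) else 0 from rfl]
    rw [hfin (fun j => a i (σ j))]
    rw [Equiv.sum_comp σ (a i)]
    exact hrow i
  have hpre : ∀ k, k ≤ N → (k:ℝ) - β ≤ ∑ i, ∑ j ∈ range k, a2 i j := by
    intro k hk
    rw [Finset.sum_comm]
    have hswap : ∀ j : ℕ, (∑ i, a2 i j) = if h : j < N then (∑ i, a i (σ ⟨j,h⟩)) else 0 := by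
      intro j
      dsimp only [a2]
      split
      · rfl
      · simp
    rw [Finset.sum_congr rfl (fun j _ => hswap j)]
    rw [dite_sum_fin k hk (fun p => ∑ i, a i (σ p))]
    set T := univ.filter (fun p : Fin N => (p:ℕ) < k) with hTdef
    have hcard : (T.card : ℝ) = k := by
      have h1 := dite_sum_fin k hk (fun _ => (1:ℝ))
      simp only [Finset.sum_const, nsmul_eq_mul, mul_one] at h1
      rw [← h1]
      rw [Finset.sum_congr rfl (fun m hm => dif_pos ((Finset.mem_range.1 hm).trans_le hk))]
      simp
    have himg : ∑ p ∈ T, (∑ i, a i (σ p)) = ∑ q ∈ T.image σ, ∑ i, a i q := by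
      rw [Finset.sum_image (fun x _ y _ h => σ.injective h)]
    rw [himg]
    have hcard2 : ((T.image σ).card : ℝ) = k := by
      rw [Finset.card_image_of_injective _ σ.injective]; exact hcard
    have := hcol (T.image σ)
    rw [hcard2] at this
    exact this
  have hlam2nn : ∀ j, 0 ≤ lam2 j := by
    intro j; dsimp only [lam2]; split
    · exact (hlam _).le
    · exact le_rfl
  have hlam2pos : ∀ j, j < N → 0 < lam2 j := by
    intro j hj; dsimp only [lam2]; rw [dif_pos hj]; exact hlam _
  have hanti2 : ∀ j k, j ≤ k → lam2 k ≤ lam2 j := by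
    intro j k hjk
    dsimp only [lam2]
    split
    · rename_i hkN
      rw [dif_pos (lt_of_le_of_lt hjk hkN)]
      exact hanti ⟨j, lt_of_le_of_lt hjk hkN⟩ ⟨k, hkN⟩ hjk
    · split
      · exact (hlam _).le
      · exact le_rfl
  have := core_sorted N β hβ0 hβ1 a2 ha2nn hrow2 hpre lam2 hlam2nn hlam2pos hanti2
  have hprodlam : ∏ j ∈ range N, lam2 j = ∏ j, lam j := by
    rw [← Fin.prod_univ_eq_prod_range (fun k => lam2 k) N]
    rw [Finset.prod_congr rfl (fun (i : Fin N) _ => show lam2 i = lam (σ i) by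
      dsimp only [lam2]; rw [dif_pos i.isLt])]
    exact Equiv.prod_comp σ lam
  have hsum2 : ∀ i, ∑ j ∈ range N, a2 i j * lam2 j = ∑ j, a i j * lam j := by
    intro i
    have hterm : ∀ k, a2 i k * lam2 k
        = if h : k < N then a i (σ ⟨k,h⟩) * lam (σ ⟨k,h⟩) else 0 := by
      intro k
      dsimp only [a2, lam2]
      split
      · rfl
      · simp
    rw [Finset.sum_congr rfl (fun k _ => hterm k)]
    rw [hfin (fun j => a i (σ j) * lam (σ j))]
    exact Equiv.sum_comp σ (fun j => a i j * lam j)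
  rw [hprodlam] at this
  rw [Finset.prod_congr rfl (fun i _ => hsum2 i)] at this
  exact this

open Matrix in
lemma mul_conjTranspose_diag {n : ℕ} (P : Matrix (Fin n) (Fin n) ℂ) (i : Fin n) :
    ((P * Pᴴ) i i).re = ∑ j, Complex.normSq (P i j) := by
  rw [Matrix.mul_apply]
  rw [Complex.re_sum]
  refine Finset.sum_congr rfl (fun j _ => ?_)
  simp [Matrix.conjTranspose_apply, Complex.star_def, Complex.mul_conj]

open Matrix in
lemma conjTranspose_mul_diag {n : ℕ} (P : Matrix (Fin n) (Fin n) ℂ) (j : Fin n) :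
    ((Pᴴ * P) j j).re = ∑ i, Complex.normSq (P i j) := by
  rw [Matrix.mul_apply]
  rw [Complex.re_sum]
  refine Finset.sum_congr rfl (fun i _ => ?_)
  rw [Matrix.conjTranspose_apply, mul_comm]
  simp [Complex.star_def, Complex.mul_conj]

open Matrix in
lemma diag_dev {n : ℕ} (K : Matrix (Fin n) (Fin n) ℂ) (hK : K.IsHermitian) :
    ∑ j, ((K j j).re)^2 ≤ (Matrix.trace (K^2)).re := by
  have hentry : ∀ j k, (K j k * K k j).re = Complex.normSq (K j k) := by
    intro j k
    have : K k j = star (K j k) := by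
      conv_lhs => rw [← hK]
      rw [Matrix.conjTranspose_apply]
    rw [this]
    simp [Complex.star_def, Complex.mul_conj]
  have htr : (Matrix.trace (K^2)).re = ∑ j, ∑ k, Complex.normSq (K j k) := by
    rw [pow_two, Matrix.trace, Complex.re_sum]
    refine Finset.sum_congr rfl (fun j _ => ?_)
    rw [Matrix.diag, Matrix.mul_apply, Complex.re_sum]
    exact Finset.sum_congr rfl (fun k _ => hentry j k)
  rw [htr]
  refine Finset.sum_le_sum (fun j _ => ?_)
  have h1 : Complex.normSq (K j j) ≤ ∑ k, Complex.normSq (K j k) :=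
    Finset.single_le_sum (fun k _ => Complex.normSq_nonneg _) (Finset.mem_univ j)
  have h2 : ((K j j).re)^2 ≤ Complex.normSq (K j j) := by
    rw [Complex.normSq_apply]
    nlinarith [sq_nonneg (K j j).im]
  nlinarith

open Matrix in
lemma trace_sq_re_nonneg {n : ℕ} (K : Matrix (Fin n) (Fin n) ℂ) (hK : K.IsHermitian) :
    0 ≤ (Matrix.trace (K^2)).re :=
  le_trans (Finset.sum_nonneg (fun j _ => sq_nonneg _)) (diag_dev K hK)

open Matrix in
lemma posSemidef_sum_conj {n N : ℕ} (B : Fin N → Matrix (Fin n) (Fin n) ℂ)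
    (X : Matrix (Fin n) (Fin n) ℂ) (hX : X.PosSemidef) :
    (∑ l, B l * X * (B l)ᴴ).PosSemidef := by
  apply Finset.sum_induction
  · exact fun a b => Matrix.PosSemidef.add
  · exact Matrix.PosSemidef.zero
  · intro l _
    obtain ⟨Y, hY⟩ : ∃ Y : Matrix (Fin n) (Fin n) ℂ, X = Yᴴ * Y := by
      open scoped MatrixOrder in
      obtain ⟨Y, hY⟩ := CStarAlgebra.nonneg_iff_eq_star_mul_self.mp hX.nonneg
      exact ⟨Y, hY⟩
    have : B l * X * (B l)ᴴ = (Y * (B l)ᴴ)ᴴ * (Y * (B l)ᴴ) := by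
      rw [Matrix.conjTranspose_mul, Matrix.conjTranspose_conjTranspose, hY]
      noncomm_ring
    rw [this]
    exact Matrix.posSemidef_conjTranspose_mul_self _

open Matrix in
lemma posDef_of_det_ne_zero {n : ℕ} {D : Matrix (Fin n) (Fin n) ℂ}
    (hD : D.PosSemidef) (hdet : D.det ≠ 0) : D.PosDef := by
  refine posDef_iff_dotProduct_mulVec.mpr
    ⟨hD.1, fun x hx => lt_of_le_of_ne (hD.dotProduct_mulVec_nonneg x) (fun heq => hx ?_)⟩
  have h0 : D *ᵥ x = 0 := (hD.dotProduct_mulVec_zero_iff x).mp heq.symm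
  have hinj : Function.Injective (D.mulVec) :=
    Matrix.mulVec_injective_iff_isUnit.mpr ((Matrix.isUnit_iff_isUnit_det D).mpr hdet.isUnit)
  have : D *ᵥ x = D *ᵥ 0 := by rw [h0, Matrix.mulVec_zero]
  exact hinj this

open Matrix in
lemma det_lower {n N : ℕ} (B : Fin N → Matrix (Fin n) (Fin n) ℂ)
    (hB1 : ∑ l, B l * (B l)ᴴ = 1)
    (ε : ℝ)
    (htr : (Matrix.trace ((((∑ l, (B l)ᴴ * B l) : Matrix (Fin n) (Fin n) ℂ) - 1)^2)).re ≤ ε)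
    (β : ℝ) (hβ : Real.sqrt (n * ε) ≤ β) (hβ1 : β < 1)
    (Z : Matrix (Fin n) (Fin n) ℂ) (hZ : Z.PosDef) :
    (1-β)^n * (Z.det).re ≤ ((∑ l, B l * Z * (B l)ᴴ).det).re := by
  classical
  have hβ0 : 0 ≤ β := le_trans (Real.sqrt_nonneg _) hβ
  have hZh := hZ.isHermitian
  set H : Matrix (Fin n) (Fin n) ℂ := ∑ l, (B l)ᴴ * B l with hHdef
  have hHh : H.IsHermitian := by
    unfold H
    rw [Matrix.IsHermitian, Matrix.conjTranspose_sum]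
    exact Finset.sum_congr rfl (fun l _ => by
      rw [Matrix.conjTranspose_mul, Matrix.conjTranspose_conjTranspose])
  set V : Matrix (Fin n) (Fin n) ℂ := (Matrix.IsHermitian.eigenvectorUnitary hZh : Matrix (Fin n) (Fin n) ℂ) with hVdef
  have hVV' : V * Vᴴ = 1 := by
    rw [← Matrix.star_eq_conjTranspose]
    exact Matrix.mem_unitaryGroup_iff.mp (Matrix.IsHermitian.eigenvectorUnitary hZh).2
  have hV'V : Vᴴ * V = 1 := by
    rw [← Matrix.star_eq_conjTranspose]
    exact Matrix.mem_unitaryGroup_iff'.mp (Matrix.IsHermitian.eigenvectorUnitary hZh).2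
  set lam := hZh.eigenvalues with hlamdef
  have hlampos : ∀ j, 0 < lam j := hZ.eigenvalues_pos
  have hZspec : Z = V * Matrix.diagonal (Complex.ofReal ∘ lam) * Vᴴ := by
    rw [hVdef, ← Matrix.star_eq_conjTranspose]
    exact hZh.spectral_theorem
  set M : Matrix (Fin n) (Fin n) ℂ := ∑ l, B l * Z * (B l)ᴴ with hMdef
  have hMh : M.IsHermitian := by
    unfold M
    rw [Matrix.IsHermitian, Matrix.conjTranspose_sum]
    refine Finset.sum_congr rfl (fun l _ => ?_)
    rw [Matrix.conjTranspose_mul, Matrix.conjTranspose_mul, Matrix.conjTranspose_conjTranspose,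
      hZh.eq, Matrix.mul_assoc]
  set W : Matrix (Fin n) (Fin n) ℂ := (Matrix.IsHermitian.eigenvectorUnitary hMh : Matrix (Fin n) (Fin n) ℂ) with hWdef
  have hWW' : W * Wᴴ = 1 := by
    rw [← Matrix.star_eq_conjTranspose]
    exact Matrix.mem_unitaryGroup_iff.mp (Matrix.IsHermitian.eigenvectorUnitary hMh).2
  have hW'W : Wᴴ * W = 1 := by
    rw [← Matrix.star_eq_conjTranspose]
    exact Matrix.mem_unitaryGroup_iff'.mp (Matrix.IsHermitian.eigenvectorUnitary hMh).2
  set mu := hMh.eigenvalues with hmudef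
  have hMspec : Wᴴ * M * W = Matrix.diagonal (Complex.ofReal ∘ mu) := by
    rw [hWdef, ← Matrix.star_eq_conjTranspose]
    have h := hMh.conjStarAlgAut_star_eigenvectorUnitary
    rw [Unitary.conjStarAlgAut_star_apply] at h
    exact h
  set P : Fin N → Matrix (Fin n) (Fin n) ℂ := fun l => Wᴴ * B l * V with hPdef
  have hPconj : ∀ l, (P l)ᴴ = Vᴴ * (B l)ᴴ * W := by
    intro l
    rw [hPdef]
    simp [Matrix.conjTranspose_mul, Matrix.mul_assoc]
  set a : Fin n → Fin n → ℝ := fun i j => ∑ l, Complex.normSq (P l i j) with hadef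
  have hann : ∀ i j, 0 ≤ a i j :=
    fun i j => Finset.sum_nonneg (fun l _ => Complex.normSq_nonneg _)
  -- row sums
  have hPP : ∑ l, P l * (P l)ᴴ = 1 := by
    have : ∀ l, P l * (P l)ᴴ = Wᴴ * (B l * (B l)ᴴ) * W := by
      intro l
      rw [hPconj l, hPdef]
      calc Wᴴ * B l * V * (Vᴴ * (B l)ᴴ * W)
          = Wᴴ * B l * (V * Vᴴ) * (B l)ᴴ * W := by noncomm_ring
        _ = Wᴴ * (B l * (B l)ᴴ) * W := by rw [hVV']; noncomm_ring
    rw [Finset.sum_congr rfl (fun l _ => this l), ← Finset.sum_mul, ← Finset.mul_sum, hB1,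
      Matrix.mul_one, hW'W]
  have hrow : ∀ i, ∑ j, a i j = 1 := by
    intro i
    have h1 : ∑ j, a i j = ∑ l, ((P l * (P l)ᴴ) i i).re := by
      rw [Finset.sum_comm (γ := Fin n)]
      exact Finset.sum_congr rfl (fun l _ => (mul_conjTranspose_diag (P l) i).symm)
    rw [h1, ← Complex.re_sum]
    have : ∑ l, (P l * (P l)ᴴ) i i = ((∑ l, P l * (P l)ᴴ) i i) := by
      rw [Matrix.sum_apply]
    rw [this, hPP]
    simp
  -- column sums
  set c : Fin n → ℝ := fun j => ((Vᴴ * H * V) j j).re with hcdef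
  have hPPc : ∑ l, (P l)ᴴ * P l = Vᴴ * H * V := by
    have : ∀ l, (P l)ᴴ * P l = Vᴴ * ((B l)ᴴ * B l) * V := by
      intro l
      rw [hPconj l, hPdef]
      calc Vᴴ * (B l)ᴴ * W * (Wᴴ * B l * V)
          = Vᴴ * (B l)ᴴ * (W * Wᴴ) * B l * V := by noncomm_ring
        _ = Vᴴ * ((B l)ᴴ * B l) * V := by rw [hWW']; noncomm_ring
    rw [Finset.sum_congr rfl (fun l _ => this l), ← Finset.sum_mul, ← Finset.mul_sum, hHdef]
  have hcol0 : ∀ j, ∑ i, a i j = c j := by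
    intro j
    have h1 : ∑ i, a i j = ∑ l, (((P l)ᴴ * P l) j j).re := by
      rw [Finset.sum_comm (γ := Fin n)]
      exact Finset.sum_congr rfl (fun l _ => (conjTranspose_mul_diag (P l) j).symm)
    rw [h1, ← Complex.re_sum]
    have : ∑ l, ((P l)ᴴ * P l) j j = ((∑ l, (P l)ᴴ * P l) j j) := by
      rw [Matrix.sum_apply]
    rw [this, hPPc, hcdef]
  -- deviation bound
  set K : Matrix (Fin n) (Fin n) ℂ := Vᴴ * H * V - 1 with hKdef
  have hKh : K.IsHermitian := by
    rw [hKdef, Matrix.IsHermitian, Matrix.conjTranspose_sub, Matrix.conjTranspose_one]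
    congr 1
    rw [Matrix.conjTranspose_mul, Matrix.conjTranspose_mul, Matrix.conjTranspose_conjTranspose,
      hHh.eq, Matrix.mul_assoc]
  have hKtr : Matrix.trace (K^2) = Matrix.trace ((H - 1)^2) := by
    have hK2 : K = Vᴴ * (H - 1) * V := by
      rw [hKdef, Matrix.mul_sub, Matrix.sub_mul, Matrix.mul_one, hV'V]
    rw [hK2, pow_two, pow_two]
    calc Matrix.trace (Vᴴ * (H-1) * V * (Vᴴ * (H-1) * V))
        = Matrix.trace (Vᴴ * ((H-1) * (H-1)) * V) := by
          rw [show Vᴴ * (H-1) * V * (Vᴴ * (H-1) * V) = Vᴴ * ((H-1) * (V * Vᴴ) * (H-1)) * V by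
            noncomm_ring, hVV']
          noncomm_ring
      _ = Matrix.trace ((H-1) * (H-1)) := by
          rw [Matrix.trace_mul_cycle, ← Matrix.mul_assoc, hVV', Matrix.one_mul]
  have hdev : ∑ j, (c j - 1)^2 ≤ ε := by
    have h1 := diag_dev K hKh
    have h2 : ∀ j, (K j j).re = c j - 1 := by
      intro j
      rw [hKdef]
      simp [Matrix.sub_apply, Matrix.one_apply_eq, hcdef]
    calc ∑ j, (c j - 1)^2 = ∑ j, ((K j j).re)^2 := by
          exact Finset.sum_congr rfl (fun j _ => by rw [h2 j])
      _ ≤ (Matrix.trace (K^2)).re := h1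
      _ = (Matrix.trace ((H-1)^2)).re := by rw [hKtr]
      _ ≤ ε := htr
  have hε0 : 0 ≤ ε := le_trans (Finset.sum_nonneg (fun j _ => sq_nonneg _)) hdev
  have hcolS : ∀ S : Finset (Fin n), (S.card : ℝ) - β ≤ ∑ j ∈ S, ∑ i, a i j := by
    intro S
    have hS1 : ∑ j ∈ S, ∑ i, a i j = (S.card : ℝ) + ∑ j ∈ S, (c j - 1) := by
      rw [Finset.sum_congr rfl (fun j _ => hcol0 j)]
      rw [Finset.sum_congr rfl (fun j (_ : j ∈ S) => show c j = 1 + (c j - 1) by ring),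
        Finset.sum_add_distrib, Finset.sum_const, nsmul_eq_mul, mul_one]
    rw [hS1]
    have hsq : (∑ j ∈ S, (c j - 1))^2 ≤ (n : ℝ) * ε := by
      calc (∑ j ∈ S, (c j - 1))^2 ≤ (S.card : ℝ) * ∑ j ∈ S, (c j - 1)^2 := by
            exact_mod_cast sq_sum_le_card_mul_sum_sq (s := S) (f := fun j => c j - 1)
        _ ≤ (n : ℝ) * ε := by
            apply mul_le_mul
            · exact_mod_cast Nat.cast_le.2 (le_trans (Finset.card_le_univ S) (by simp))
            · refine le_trans (Finset.sum_le_sum_of_subset_of_nonneg (Finset.subset_univ S)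
                (fun j _ _ => sq_nonneg _)) hdev
            · exact Finset.sum_nonneg (fun j _ => sq_nonneg _)
            · exact Nat.cast_nonneg n
    have habs : |∑ j ∈ S, (c j - 1)| ≤ β := by
      rw [← Real.sqrt_sq_eq_abs]
      exact le_trans (Real.sqrt_le_sqrt hsq) hβ
    have := neg_abs_le (∑ j ∈ S, (c j - 1))
    linarith [abs_nonneg (∑ j ∈ S, (c j - 1)), neg_le_of_abs_le habs]
  -- eigenvalue identity
  have hmu : ∀ i, mu i = ∑ j, a i j * lam j := by
    have hWMW : Wᴴ * M * W = ∑ l, P l * Matrix.diagonal (Complex.ofReal ∘ lam) * (P l)ᴴ := by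
      rw [hMdef, Finset.mul_sum, Finset.sum_mul]
      refine Finset.sum_congr rfl (fun l _ => ?_)
      rw [hZspec, hPconj l, hPdef]
      noncomm_ring
    intro i
    have h1 : Complex.ofReal (mu i)
        = ∑ l, (P l * Matrix.diagonal (Complex.ofReal ∘ lam) * (P l)ᴴ) i i := by
      rw [← Matrix.sum_apply, ← hWMW, hMspec]
      simp
    have hterm : ∀ l, ((P l * Matrix.diagonal (Complex.ofReal ∘ lam) * (P l)ᴴ) i i).re
        = ∑ j, lam j * Complex.normSq (P l i j) := by
      intro l
      rw [Matrix.mul_apply, Complex.re_sum]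
      refine Finset.sum_congr rfl (fun j _ => ?_)
      rw [Matrix.mul_diagonal, Matrix.conjTranspose_apply]
      have : P l i j * ((Complex.ofReal ∘ lam) j) * star (P l i j)
          = Complex.ofReal (lam j) * Complex.ofReal (Complex.normSq (P l i j)) := by
        simp only [Function.comp_apply]
        rw [mul_comm (P l i j) (Complex.ofReal (lam j)), mul_assoc]
        congr 1
        simp [Complex.star_def, Complex.mul_conj]
      rw [this, ← Complex.ofReal_mul]
      simp
    have h2 : mu i = ∑ l, ∑ j, lam j * Complex.normSq (P l i j) := by
      have := congrArg Complex.re h1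
      rw [Complex.ofReal_re, Complex.re_sum] at this
      rw [this]
      exact Finset.sum_congr rfl (fun l _ => hterm l)
    have h3 : ∑ l, ∑ j, lam j * Complex.normSq (P l i j)
        = ∑ j, ∑ l, lam j * Complex.normSq (P l i j) := Finset.sum_comm
    rw [h2, h3]
    refine Finset.sum_congr rfl (fun j _ => ?_)
    have ha' : a i j = ∑ l, Complex.normSq (P l i j) := by rw [hadef]
    rw [← Finset.mul_sum, ← ha']
    ring
  -- conclude
  have hcore := core_main n β hβ0 hβ1 a hann hrow hcolS lam hlampos
  have hdetZ : (Z.det).re = ∏ j, lam j := by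
    rw [hZh.det_eq_prod_eigenvalues]
    norm_cast
  have hdetM : (M.det).re = ∏ i, mu i := by
    rw [hMh.det_eq_prod_eigenvalues]
    norm_cast
  rw [hdetM, hdetZ]
  calc (1-β)^n * ∏ j, lam j ≤ ∏ i, ∑ j, a i j * lam j := hcore
    _ = ∏ i, mu i := Finset.prod_congr rfl (fun i _ => (hmu i).symm)

open Matrix in
lemma posDef_conj {n : ℕ} {X E : Matrix (Fin n) (Fin n) ℂ} (hX : X.PosDef)
    (hE : IsUnit E.det) : (Eᴴ * X * E).PosDef := by
  refine posDef_iff_dotProduct_mulVec.mpr ⟨?_, fun x hx => ?_⟩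
  · rw [Matrix.IsHermitian, Matrix.conjTranspose_mul, Matrix.conjTranspose_mul,
      Matrix.conjTranspose_conjTranspose, hX.1.eq, Matrix.mul_assoc]
  · have key : star x ⬝ᵥ (Eᴴ * X * E) *ᵥ x = star (E *ᵥ x) ⬝ᵥ X *ᵥ (E *ᵥ x) := by
      rw [Matrix.star_mulVec, ← Matrix.mulVec_mulVec, ← Matrix.mulVec_mulVec,
        Matrix.dotProduct_mulVec (star x) Eᴴ]
    rw [key]
    apply hX.dotProduct_mulVec_pos
    intro h0
    apply hx
    have hinj : Function.Injective (E.mulVec) :=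
      Matrix.mulVec_injective_iff_isUnit.mpr ((Matrix.isUnit_iff_isUnit_det E).mpr hE)
    apply hinj
    rw [h0, Matrix.mulVec_zero]

open Matrix in
lemma posDef_ofReal_smul {n : ℕ} {X : Matrix (Fin n) (Fin n) ℂ} (hX : X.PosDef)
    {t : ℝ} (ht : 0 < t) : (((t:ℂ) • X)).PosDef := by
  refine posDef_iff_dotProduct_mulVec.mpr ⟨?_, fun x hx => ?_⟩
  · rw [Matrix.IsHermitian, Matrix.conjTranspose_smul, hX.1.eq, Complex.star_def,
      Complex.conj_ofReal]
  · rw [Matrix.smul_mulVec, dotProduct_smul, smul_eq_mul]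
    have hq := hX.dotProduct_mulVec_pos hx
    rw [Complex.lt_def] at hq ⊢
    obtain ⟨h1, h2⟩ := hq
    constructor
    · simp only [Complex.mul_re, Complex.ofReal_re, Complex.ofReal_im, Complex.zero_re] at *
      nlinarith
    · simp only [Complex.mul_im, Complex.ofReal_re, Complex.ofReal_im, Complex.zero_im] at *
      rw [← h2]; ring

open Matrix in
lemma det_re_nonneg_of_posSemidef {n : ℕ} {D : Matrix (Fin n) (Fin n) ℂ}
    (hD : D.PosSemidef) : 0 ≤ D.det.re := by
  rw [hD.1.det_eq_prod_eigenvalues]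
  exact_mod_cast Finset.prod_nonneg (fun i (_ : i ∈ Finset.univ) => hD.eigenvalues_nonneg i)

open Matrix in
lemma trace_sq_comm {n : ℕ} (X Y : Matrix (Fin n) (Fin n) ℂ) :
    Matrix.trace ((X*Y - 1)^2) = Matrix.trace ((Y*X - 1)^2) := by
  have e : ∀ (Z : Matrix (Fin n) (Fin n) ℂ), (Z - 1)^2 = Z*Z - Z - Z + 1 := by
    intro Z; noncomm_ring
  rw [e, e]
  simp only [Matrix.trace_add, Matrix.trace_sub]
  have h1 : Matrix.trace (X*Y*(X*Y)) = Matrix.trace (Y*X*(Y*X)) := by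
    rw [show X*Y*(X*Y) = X*(Y*X*Y) by noncomm_ring, Matrix.trace_mul_comm X (Y*X*Y)]
    noncomm_ring
  have h2 : Matrix.trace (X*Y) = Matrix.trace (Y*X) := Matrix.trace_mul_comm X Y
  rw [h1, h2]

end CapProof

theorem cap_bounds_of_approximate_fixed_point (n m : ℕ) (ε : ℝ)
    (A : Fin m → Matrix (Fin n) (Fin n) ℂ)
    (C : Matrix (Fin n) (Fin n) ℂ) (hC : C.PosDef)
    (hTC : IsUnit (∑ i, A i * C * (A i)ᴴ).det)
    (hfix : (Matrix.trace
        ((C * (∑ i, (A i)ᴴ * (∑ j, A j * C * (A j)ᴴ)⁻¹ * A i) - 1) ^ 2)).re ≤ ε)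
    (hε : ε ≤ 1 / ((n : ℝ) + 1)) :
    (1 - Real.sqrt (n * ε)) ^ n * ((∑ i, A i * C * (A i)ᴴ).det).re / (C.det).re ≤ cap A ∧
      cap A ≤ ((∑ i, A i * C * (A i)ᴴ).det).re / (C.det).re := by
  classical
  set β := Real.sqrt (n * ε) with hβdef
  set D : Matrix (Fin n) (Fin n) ℂ := ∑ i, A i * C * (A i)ᴴ with hDdef
  set Φ : Matrix (Fin n) (Fin n) ℂ := ∑ i, (A i)ᴴ * D⁻¹ * A i with hΦdef
  have hCpsd := hC.posSemidef
  have hDpsd : D.PosSemidef := CapProof.posSemidef_sum_conj A C hCpsd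
  have hDdetne : D.det ≠ 0 := hTC.ne_zero
  have hD : D.PosDef := CapProof.posDef_of_det_ne_zero hDpsd hDdetne
  have hCdetpos : 0 < C.det := hC.det_pos
  have hDdetpos : 0 < D.det := hD.det_pos
  set dC := C.det.re with hdCdef
  set dD := D.det.re with hdDdef
  have hdCpos : 0 < dC := (Complex.lt_def.mp hCdetpos).1
  have hdDpos : 0 < dD := (Complex.lt_def.mp hDdetpos).1
  have hCdet : C.det = (dC:ℂ) := by
    apply Complex.ext
    · simp [hdCdef]
    · simpa using ((Complex.lt_def.mp hCdetpos).2).symm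
  have hDdet : D.det = (dD:ℂ) := by
    apply Complex.ext
    · simp [hdDdef]
    · simpa using ((Complex.lt_def.mp hDdetpos).2).symm
  -- opaque square roots
  obtain ⟨R, hRpsd, hRR⟩ : ∃ R : Matrix (Fin n) (Fin n) ℂ, R.PosSemidef ∧ R * R = C :=
    open scoped MatrixOrder in
    ⟨CFC.sqrt C, (CFC.sqrt_nonneg C).posSemidef, CFC.sqrt_mul_sqrt_self C hCpsd.nonneg⟩
  obtain ⟨SD, hSDpsd, hSS⟩ : ∃ S : Matrix (Fin n) (Fin n) ℂ, S.PosSemidef ∧ S * S = D :=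
    open scoped MatrixOrder in
    ⟨CFC.sqrt D, (CFC.sqrt_nonneg D).posSemidef, CFC.sqrt_mul_sqrt_self D hDpsd.nonneg⟩
  have hRh : Rᴴ = R := hRpsd.1
  have hSDh : SDᴴ = SD := hSDpsd.1
  have hRdetne : R.det ≠ 0 := by
    intro h
    apply hCdetpos.ne'
    rw [← hRR, Matrix.det_mul, h, mul_zero]
  have hRunit : IsUnit R.det := isUnit_iff_ne_zero.mpr hRdetne
  have hRinv : R * R⁻¹ = 1 := Matrix.mul_nonsing_inv R hRunit
  have hRinv' : R⁻¹ * R = 1 := Matrix.nonsing_inv_mul R hRunit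
  have hRinvh : (R⁻¹)ᴴ = R⁻¹ := by
    rw [Matrix.conjTranspose_nonsing_inv, hRh]
  have hSDdetne : SD.det ≠ 0 := by
    intro h
    apply hDdetpos.ne'
    rw [← hSS, Matrix.det_mul, h, mul_zero]
  have hSDunit : IsUnit SD.det := isUnit_iff_ne_zero.mpr hSDdetne
  set Q := SD⁻¹ with hQdef
  have hQh : Qᴴ = Q := by
    rw [hQdef, Matrix.conjTranspose_nonsing_inv, hSDh]
  have hQSD : Q * SD = 1 := Matrix.nonsing_inv_mul SD hSDunit
  have hSDQ : SD * Q = 1 := Matrix.mul_nonsing_inv SD hSDunit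
  have hQQ : Q * Q = D⁻¹ := by
    rw [hQdef, ← Matrix.mul_inv_rev, hSS]
  have hQDQ : Q * D * Q = 1 := by
    rw [← hSS, show Q * (SD * SD) * Q = (Q * SD) * (SD * Q) by noncomm_ring, hQSD, hSDQ,
      one_mul]
  -- real values of the determinants of the square roots
  have hRdetreal : R.det = ((R.det.re : ℝ) : ℂ) := by
    apply Complex.ext
    · rfl
    · rw [hRpsd.1.det_eq_prod_eigenvalues]
      norm_cast
  have hSDdetreal : SD.det = ((SD.det.re : ℝ) : ℂ) := by
    apply Complex.ext
    · rfl
    · rw [hSDpsd.1.det_eq_prod_eigenvalues]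
      norm_cast
  set dR := R.det.re with hdRdef
  set dSD := SD.det.re with hdSDdef
  have hdRdC : dR * dR = dC := by
    have h1 : R.det * R.det = C.det := by rw [← Matrix.det_mul, hRR]
    rw [hRdetreal, hCdet] at h1
    exact_mod_cast h1
  have hdSDdD : dSD * dSD = dD := by
    have h1 : SD.det * SD.det = D.det := by rw [← Matrix.det_mul, hSS]
    rw [hSDdetreal, hDdet] at h1
    exact_mod_cast h1
  -- scaled Kraus operators
  set B : Fin m → Matrix (Fin n) (Fin n) ℂ := fun l => Q * A l * R with hBdef
  have hBH : ∀ l, (B l)ᴴ = R * (A l)ᴴ * Q := by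
    intro l
    rw [hBdef]
    simp only [Matrix.conjTranspose_mul, hRh, hQh, Matrix.mul_assoc]
  have hBBH : ∀ l, B l * (B l)ᴴ = Q * (A l * C * (A l)ᴴ) * Q := by
    intro l
    rw [hBH l, hBdef]
    calc Q * A l * R * (R * (A l)ᴴ * Q)
        = Q * (A l * (R * R) * (A l)ᴴ) * Q := by noncomm_ring
      _ = Q * (A l * C * (A l)ᴴ) * Q := by rw [hRR]
  have hB1 : ∑ l, B l * (B l)ᴴ = 1 := by
    rw [Finset.sum_congr rfl (fun l _ => hBBH l)]
    have h2 : ∑ l, Q * (A l * C * (A l)ᴴ) * Q = Q * (∑ l, A l * C * (A l)ᴴ) * Q := by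
      rw [Finset.mul_sum, Finset.sum_mul]
    rw [h2, ← hDdef, hQDQ]
  have hBHB : ∀ l, (B l)ᴴ * B l = R * ((A l)ᴴ * D⁻¹ * A l) * R := by
    intro l
    rw [hBH l, hBdef]
    calc R * (A l)ᴴ * Q * (Q * A l * R)
        = R * ((A l)ᴴ * (Q * Q) * A l) * R := by noncomm_ring
      _ = _ := by rw [hQQ]
  have hHB : ∑ l, (B l)ᴴ * B l = R * Φ * R := by
    rw [Finset.sum_congr rfl (fun l _ => hBHB l)]
    rw [show ∑ l, R * ((A l)ᴴ * D⁻¹ * A l) * R = R * (∑ l, (A l)ᴴ * D⁻¹ * A l) * R by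
      rw [Finset.mul_sum, Finset.sum_mul], ← hΦdef]
  have htrB : (Matrix.trace ((((∑ l, (B l)ᴴ * B l) : Matrix (Fin n) (Fin n) ℂ) - 1)^2)).re
      ≤ ε := by
    rw [hHB]
    have expand : ∀ (Y : Matrix (Fin n) (Fin n) ℂ), Matrix.trace ((Y - 1)^2)
        = Matrix.trace (Y*Y) - 2 * Matrix.trace Y + Matrix.trace (1 : Matrix (Fin n) (Fin n) ℂ) := by
      intro Y
      rw [show (Y-1)^2 = Y*Y - Y - Y + 1 by noncomm_ring]
      rw [Matrix.trace_add, Matrix.trace_sub, Matrix.trace_sub]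
      ring
    have e1 : Matrix.trace ((R*Φ*R) * (R*Φ*R)) = Matrix.trace ((C*Φ)*(C*Φ)) := by
      calc Matrix.trace ((R*Φ*R) * (R*Φ*R))
          = Matrix.trace (R * (Φ*(R*R)*Φ*R)) := by rw [show (R*Φ*R)*(R*Φ*R) = R * (Φ*(R*R)*Φ*R) by noncomm_ring]
        _ = Matrix.trace ((Φ*(R*R)*Φ*R) * R) := Matrix.trace_mul_comm _ _
        _ = Matrix.trace ((Φ*(R*R))*(Φ*(R*R))) := by rw [show (Φ*(R*R)*Φ*R) * R = (Φ*(R*R))*(Φ*(R*R)) by noncomm_ring]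
        _ = Matrix.trace ((Φ*C)*(Φ*C)) := by rw [hRR]
        _ = Matrix.trace (Φ * (C*Φ*C)) := by rw [show (Φ*C)*(Φ*C) = Φ * (C*Φ*C) by noncomm_ring]
        _ = Matrix.trace ((C*Φ*C) * Φ) := Matrix.trace_mul_comm _ _
        _ = Matrix.trace ((C*Φ)*(C*Φ)) := by rw [show (C*Φ*C) * Φ = (C*Φ)*(C*Φ) by noncomm_ring]
    have e2 : Matrix.trace (R*Φ*R) = Matrix.trace (C*Φ) := by
      calc Matrix.trace (R*Φ*R) = Matrix.trace (R * (Φ*R)) := by rw [Matrix.mul_assoc]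
        _ = Matrix.trace ((Φ*R) * R) := Matrix.trace_mul_comm _ _
        _ = Matrix.trace (Φ*(R*R)) := by rw [Matrix.mul_assoc]
        _ = Matrix.trace (Φ*C) := by rw [hRR]
        _ = Matrix.trace (C*Φ) := Matrix.trace_mul_comm _ _
    have e3 : Matrix.trace ((R*Φ*R - 1)^2) = Matrix.trace ((C*Φ - 1)^2) := by
      rw [expand (R*Φ*R), expand (C*Φ), e1, e2,
        show (C*Φ)*(C*Φ) = (C*Φ)*(C*Φ) from rfl]
    rw [e3]
    exact hfix
  -- bounds on β
  have hβ0 : 0 ≤ β := Real.sqrt_nonneg _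
  have hβ1 : β < 1 := by
    have h1 : (n:ℝ) * ε ≤ (n:ℝ) / ((n:ℝ)+1) := by
      have hn0 : (0:ℝ) ≤ n := Nat.cast_nonneg n
      calc (n:ℝ) * ε ≤ (n:ℝ) * (1/((n:ℝ)+1)) := mul_le_mul_of_nonneg_left hε hn0
        _ = (n:ℝ)/((n:ℝ)+1) := by ring
    have h2 : (n:ℝ)/((n:ℝ)+1) < 1 := by
      rw [div_lt_one (by positivity)]
      linarith
    calc β ≤ Real.sqrt ((n:ℝ)/((n:ℝ)+1)) := Real.sqrt_le_sqrt h1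
      _ < 1 := by
          have h3 := Real.sqrt_lt_sqrt (by positivity : (0:ℝ) ≤ (n:ℝ)/((n:ℝ)+1)) h2
          rwa [Real.sqrt_one] at h3
  -- lower bound for all elements of the capacity set
  have hlow : ∀ r ∈ { r : ℝ | ∃ X : Matrix (Fin n) (Fin n) ℂ,
      X.PosDef ∧ X.det = 1 ∧ ((∑ i, A i * X * (A i)ᴴ).det).re = r },
      (1-β)^n * dD / dC ≤ r := by
    rintro r ⟨X, hX, hXdet, rfl⟩
    set Z := R⁻¹ * X * R⁻¹ with hZdef
    have hZpd : Z.PosDef := by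
      have hE : IsUnit (R⁻¹).det := (Matrix.isUnit_nonsing_inv_det R hRunit)
      have h3 := CapProof.posDef_conj hX hE
      rwa [hRinvh] at h3
    have hTXZ : ∑ l, B l * Z * (B l)ᴴ = Q * (∑ l, A l * X * (A l)ᴴ) * Q := by
      rw [show ∑ l, B l * Z * (B l)ᴴ = ∑ l, Q * (A l * X * (A l)ᴴ) * Q from ?_,
        Finset.mul_sum, Finset.sum_mul]
      refine Finset.sum_congr rfl (fun l _ => ?_)
      rw [hBH l, hBdef, hZdef]
      calc Q * A l * R * (R⁻¹ * X * R⁻¹) * (R * (A l)ᴴ * Q)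
          = Q * (A l * ((R * R⁻¹) * X * (R⁻¹ * R)) * (A l)ᴴ) * Q := by noncomm_ring
        _ = Q * (A l * X * (A l)ᴴ) * Q := by
            rw [hRinv, hRinv', Matrix.one_mul, Matrix.mul_one]
    have hβself : Real.sqrt ((n:ℝ) * ε) ≤ β := le_of_eq hβdef.symm
    have hlower := CapProof.det_lower B hB1 ε htrB β hβself hβ1 Z hZpd
    have hdetZ : Z.det = ((dC⁻¹ : ℝ) : ℂ) := by
      rw [hZdef, Matrix.det_mul, Matrix.det_mul, hXdet, mul_one,
        Matrix.det_nonsing_inv, Ring.inverse_eq_inv, hRdetreal,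
        ← Complex.ofReal_inv, ← Complex.ofReal_mul, ← mul_inv, hdRdC]
    have hZre : (Z.det).re = dC⁻¹ := by rw [hdetZ, Complex.ofReal_re]
    have hexp : ∑ l, A l * X * (A l)ᴴ = SD * (∑ l, B l * Z * (B l)ᴴ) * SD := by
      rw [hTXZ, show SD * (Q * (∑ l, A l * X * (A l)ᴴ) * Q) * SD
          = (SD * Q) * (∑ l, A l * X * (A l)ᴴ) * (Q * SD) by noncomm_ring,
        hSDQ, hQSD, Matrix.one_mul, Matrix.mul_one]
    have hTXdet : ((∑ l, A l * X * (A l)ᴴ).det).re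
        = dD * ((∑ l, B l * Z * (B l)ᴴ).det).re := by
      rw [hexp, Matrix.det_mul, Matrix.det_mul, hSDdetreal]
      rw [mul_right_comm, ← Complex.ofReal_mul, hdSDdD]
      simp [Complex.mul_re]
    rw [hTXdet]
    have h5 : dD * ((1-β)^n * (Z.det).re) ≤ dD * ((∑ l, B l * Z * (B l)ᴴ).det).re :=
      mul_le_mul_of_nonneg_left hlower hdDpos.le
    rw [hZre] at h5
    calc (1-β)^n * dD / dC = dD * ((1-β)^n * dC⁻¹) := by
          rw [div_eq_mul_inv]; ring
      _ ≤ dD * ((∑ l, B l * Z * (B l)ᴴ).det).re := h5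
  -- membership of the candidate dD / dC
  have hmem : dD / dC ∈ { r : ℝ | ∃ X : Matrix (Fin n) (Fin n) ℂ,
      X.PosDef ∧ X.det = 1 ∧ ((∑ i, A i * X * (A i)ᴴ).det).re = r } := by
    set t : ℝ := dC ^ (-(1:ℝ)/(n:ℝ)) with htdef
    have ht0 : 0 < t := Real.rpow_pos_of_pos hdCpos _
    refine ⟨(t:ℂ) • C, CapProof.posDef_ofReal_smul hC ht0, ?_, ?_⟩
    · rw [Matrix.det_smul, Fintype.card_fin, hCdet, ← Complex.ofReal_pow,
        ← Complex.ofReal_mul]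
      by_cases hn : n = 0
      · subst hn
        have : dC = 1 := by
          have := hCdet
          rw [Matrix.det_fin_zero] at this
          exact_mod_cast this.symm
        simp [this]
      · have htn : t^(n:ℕ) * dC = 1 := by
          rw [htdef, ← Real.rpow_natCast (dC ^ (-(1:ℝ)/(n:ℝ))) n, ← Real.rpow_mul hdCpos.le,
            show (-(1:ℝ)/(n:ℝ)) * (n:ℝ) = -1 by
              field_simp,
            Real.rpow_neg_one]
          exact inv_mul_cancel₀ hdCpos.ne'
        rw [htn, Complex.ofReal_one]
    · have hTX0 : ∑ l, A l * ((t:ℂ) • C) * (A l)ᴴ = (t:ℂ) • D := by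
        rw [hDdef, Finset.smul_sum]
        refine Finset.sum_congr rfl (fun l _ => ?_)
        rw [Matrix.mul_smul, Matrix.smul_mul]
      rw [hTX0, Matrix.det_smul, Fintype.card_fin, hDdet, ← Complex.ofReal_pow,
        ← Complex.ofReal_mul, Complex.ofReal_re]
      by_cases hn : n = 0
      · subst hn
        have h6 : dC = 1 := by
          have := hCdet
          rw [Matrix.det_fin_zero] at this
          exact_mod_cast this.symm
        simp [h6]
      · have htn : t^(n:ℕ) = dC⁻¹ := by
          rw [htdef, ← Real.rpow_natCast (dC ^ (-(1:ℝ)/(n:ℝ))) n, ← Real.rpow_mul hdCpos.le,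
            show (-(1:ℝ)/(n:ℝ)) * (n:ℝ) = -1 by field_simp,
            Real.rpow_neg_one]
        rw [htn, div_eq_mul_inv]
        ring
  constructor
  · exact le_csInf ⟨dD / dC, hmem⟩ hlow
  · exact csInf_le ⟨(1-β)^n * dD / dC, fun r hr => hlow r hr⟩ hmem
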